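/- Let A = (Q, q₀, δ, c) be a deterministic parity automaton over ℕ. Player II wins the Gale–Stewart game Γ(L_A) if and only if the vertex (q₀, I, 0) belongs to the winning region of Player II in the parity game over the game graph G(A). Analogously, Player I wins Γ(L_A) if and only if (q₀, I, 0) belongs to the winning region of Player I in the parity game over G(A). -/
import Mathlib


/-- The maximal color occurring infinitely often in the sequence `s` exists and is even. -/
def MaxInfEven (s : ℕ → ℕ) : Prop :=
  ∃ m, Even m ∧ {k | s k = m}.Infinite ∧ ∀ m', {k | s k = m'}.Infinite → m' ≤ m

/-- The two players of an infinite game. -/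
inductive Player
  | one
  | two

/-- The opponent of a player. -/
def Player.other : Player → Player
  | .one => .two
  | .two => .one

/-- A parity game graph: every element of `V` is a vertex, owned by a player,
with edge relation `E` and coloring `color`. -/
structure GameGraph (V : Type) where
  owner : V → Player
  E : V → V → Prop
  color : V → ℕ

/-- The play `π` is won by player `p`: for Player II this means the maximal color
occurring infinitely often is even, for Player I that it is not. -/
def GameGraph.WonBy {V : Type} (G : GameGraph V) (p : Player) (π : ℕ → V) : Prop :=
  match p with
  | .two => MaxInfEven (fun n => G.color (π n))
  | .one => ¬ MaxInfEven (fun n => G.color (π n))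

/-- The finite prefix `π 0, …, π n` of an infinite sequence, as a list. -/
def hist {V : Type} (π : ℕ → V) (n : ℕ) : List V :=
  List.ofFn (fun i : Fin (n + 1) => π i.val)

/-- Finite play prefixes from `u₀` in which player `p` always moves according to
the strategy `σ` (given as a function from nonempty play prefixes to vertices). -/
inductive ConsHist {V : Type} (G : GameGraph V) (p : Player) (σ : List V → V) (u₀ : V) :
    List V → Prop
  | init : ConsHist G p σ u₀ [u₀]
  | ownStep (l : List V) (v : V) : ConsHist G p σ u₀ l → l.getLast? = some v →
      G.owner v = p → ConsHist G p σ u₀ (l ++ [σ l])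
  | oppStep (l : List V) (v w : V) : ConsHist G p σ u₀ l → l.getLast? = some v →
      G.owner v ≠ p → G.E v w → ConsHist G p σ u₀ (l ++ [w])

/-- `σ` is a (legal) strategy for player `p` from `u₀`: at every play prefix from `u₀`
consistent with `σ` and ending in a vertex of `p`, the prescribed move is along an edge. -/
def IsStrategyFrom {V : Type} (G : GameGraph V) (p : Player) (σ : List V → V) (u₀ : V) : Prop :=
  ∀ l v, ConsHist G p σ u₀ l → l.getLast? = some v → G.owner v = p → G.E v (σ l)

/-- `π` is an infinite play from `u₀`. -/
def IsPlayFrom {V : Type} (G : GameGraph V) (u₀ : V) (π : ℕ → V) : Prop :=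
  π 0 = u₀ ∧ ∀ n, G.E (π n) (π (n + 1))

/-- In the play `π`, player `p` always moves according to the strategy `σ`. -/
def ConsistentPlay {V : Type} (G : GameGraph V) (p : Player) (σ : List V → V) (π : ℕ → V) :
    Prop :=
  ∀ n, G.owner (π n) = p → π (n + 1) = σ (hist π n)

/-- `σ` is a winning strategy for player `p` from `u₀`. -/
def WinningStrategyFrom {V : Type} (G : GameGraph V) (p : Player) (σ : List V → V) (u₀ : V) :
    Prop :=
  IsStrategyFrom G p σ u₀ ∧
    ∀ π, IsPlayFrom G u₀ π → ConsistentPlay G p σ π → G.WonBy p π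

/-- The strategy induced by a memoryless strategy `f` (depending only on the last vertex). -/
def liftMemoryless {V : Type} (f : V → V) (u₀ : V) : List V → V :=
  fun l => f (l.getLast?.getD u₀)

/-- The memoryless strategy `f` is a winning strategy for player `p` from `u₀`. -/
def MemorylessWinningFrom {V : Type} (G : GameGraph V) (p : Player) (f : V → V) (u₀ : V) :
    Prop :=
  WinningStrategyFrom G p (liftMemoryless f u₀) u₀

/-- The winning region of player `p`: the vertices from which `p` has a winning strategy. -/
def WinningRegion {V : Type} (G : GameGraph V) (p : Player) : Set V :=
  {u | ∃ σ, WinningStrategyFrom G p σ u}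

/-- The list `m 0, …, m k`. -/
def prefixList (m : ℕ → ℕ) (k : ℕ) : List ℕ :=
  List.ofFn (fun i : Fin (k + 1) => m i.val)

/-- The interleaving `m 0, n 0, m 1, n 1, …` of two sequences. -/
def interleave (m n : ℕ → ℕ) : ℕ → ℕ :=
  fun k => if k % 2 = 0 then m (k / 2) else n (k / 2)

/-- `σ` is a winning strategy for Player II in the Gale–Stewart game with winning
condition `L`: for every sequence of choices of Player I, the play in which Player II
answers `m₀ … m_k` with `σ (m₀ … m_k)` belongs to `L`. -/
def IsWinningStrategyII (L : Set (ℕ → ℕ)) (σ : List ℕ → ℕ) : Prop :=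
  ∀ m : ℕ → ℕ, interleave m (fun k => σ (prefixList m k)) ∈ L

/-- Player II wins the Gale–Stewart game with winning condition `L`. -/
def WinsII (L : Set (ℕ → ℕ)) : Prop := ∃ σ, IsWinningStrategyII L σ

/-- The sequence of choices of Player I determined by the strategy `τ` against the
choices `n` of Player II: `m₀ = τ ε` and `m_{k+1} = τ (n₀ … n_k)`. -/
def playerIMoves (τ : List ℕ → ℕ) (n : ℕ → ℕ) : ℕ → ℕ
  | 0 => τ []
  | k + 1 => τ (prefixList n k)

/-- `τ` is a winning strategy for Player I in the Gale–Stewart game with winning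
condition `L`. -/
def IsWinningStrategyI (L : Set (ℕ → ℕ)) (τ : List ℕ → ℕ) : Prop :=
  ∀ n : ℕ → ℕ, interleave (playerIMoves τ n) n ∉ L

/-- Player I wins the Gale–Stewart game with winning condition `L`. -/
def WinsI (L : Set (ℕ → ℕ)) : Prop := ∃ τ, IsWinningStrategyI L τ

/-- A deterministic parity automaton over the alphabet ℕ, with control states `Q`,
configurations in `Q × ℕ`, transition function `next` and coloring `color`. -/
structure DPA (Q : Type) where
  q0 : Q
  next : Q × ℕ → ℕ → Q × ℕ
  color : Q → ℕ

/-- The run of `A` on `α`: the sequence of configurations starting in `(q₀, 0)`. -/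
def DPA.run {Q : Type} (A : DPA Q) (α : ℕ → ℕ) : ℕ → Q × ℕ
  | 0 => (A.q0, 0)
  | k + 1 => A.next (DPA.run A α k) (α k)

/-- The ω-language recognized by `A`: the ω-words whose run has an even maximal color
occurring infinitely often. -/
def DPA.Lang {Q : Type} (A : DPA Q) : Set (ℕ → ℕ) :=
  {α | MaxInfEven (fun k => A.color (A.run α k).1)}

/-- The game graph `G(A)` of a deterministic parity automaton `A`: vertices `(p, X, i)`
(configuration `(p, i)`, player `X` to move), with an edge from `(p, X, i)` to
`(q, Y, j)` iff `Y` is the opponent of `X` and some input `m` leads from `(p, i)` to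
`(q, j)`; the color of `(p, X, i)` is the color of `p`. -/
def DPA.gameGraph {Q : Type} (A : DPA Q) : GameGraph (Q × Player × ℕ) where
  owner v := v.2.1
  E v w := w.2.1 = v.2.1.other ∧ ∃ m : ℕ, A.next (v.1, v.2.2) m = (w.1, w.2.2)
  color v := A.color v.1

deriving instance DecidableEq for Player

namespace GSAux

@[simp] lemma Player.other_other (p : Player) : p.other.other = p := by cases p <;> rfl

/-- player to move at step `k` (I at even, II at odd). -/
def plr (k : ℕ) : Player := if k % 2 = 0 then .one else .two

lemma plr_succ (k : ℕ) : plr (k + 1) = (plr k).other := by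
  rcases Nat.mod_two_eq_zero_or_one k with h | h
  · have h2 : (k + 1) % 2 = 1 := by omega
    simp [plr, h, h2, Player.other]
  · have h2 : (k + 1) % 2 = 0 := by omega
    simp [plr, h, h2, Player.other]

lemma plr_two_mul (j : ℕ) : plr (2 * j) = .one := by simp [plr, Nat.mul_mod_right]

lemma plr_two_mul_add_one (j : ℕ) : plr (2 * j + 1) = .two := by
  have : (2 * j + 1) % 2 = 1 := by omega
  simp [plr, this]

lemma even_of_plr_ne_two {k : ℕ} (h : plr k ≠ .two) : k % 2 = 0 := by
  rcases Nat.mod_two_eq_zero_or_one k with h2 | h2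
  · exact h2
  · exact absurd (by simp [plr, h2]) h

lemma odd_of_plr_ne_one {k : ℕ} (h : plr k ≠ .one) : k % 2 = 1 := by
  rcases Nat.mod_two_eq_zero_or_one k with h2 | h2
  · exact absurd (by simp [plr, h2]) h
  · exact h2

/- ### generic list lemmas -/

lemma ofFn_congr {α : Type _} {n m : ℕ} (h : n = m) (f : Fin n → α) (g : Fin m → α)
    (hfg : ∀ i : Fin n, f i = g (Fin.cast h i)) : List.ofFn f = List.ofFn g := by
  subst h
  exact congrArg List.ofFn (funext hfg)

lemma ofFn_congr' {α : Type _} {n m : ℕ} (h : n = m) (f : Fin n → α) (g : Fin m → α)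
    (hfg : ∀ (i : ℕ) (h1 : i < n) (h2 : i < m), f ⟨i, h1⟩ = g ⟨i, h2⟩) :
    List.ofFn f = List.ofFn g := by
  subst h
  exact congrArg List.ofFn (funext fun i => hfg i i.2 i.2)

lemma getD_ofFn {α : Type _} {n : ℕ} (f : Fin n → α) {i : ℕ} (h : i < n) (d : α) :
    (List.ofFn f).getD i d = f ⟨i, h⟩ := by
  have hl : i < (List.ofFn f).length := by simpa using h
  rw [List.getD_eq_getElem?_getD, List.getElem?_eq_getElem hl, Option.getD_some,
    List.getElem_ofFn]

lemma hist_zero {V : Type} (π : ℕ → V) : hist π 0 = [π 0] := rfl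

lemma hist_succ {V : Type} (π : ℕ → V) (n : ℕ) :
    hist π (n + 1) = hist π n ++ [π (n + 1)] := by
  rw [hist, List.ofFn_succ', List.concat_eq_append]
  rfl

lemma hist_getLast? {V : Type} (π : ℕ → V) (n : ℕ) :
    (hist π n).getLast? = some (π n) := by
  cases n with
  | zero => rfl
  | succ n => rw [hist_succ, List.getLast?_concat]

lemma hist_length {V : Type} (π : ℕ → V) (n : ℕ) : (hist π n).length = n + 1 := by
  simp [hist]

lemma hist_getD {V : Type} (π : ℕ → V) {i n : ℕ} (h : i ≤ n) (d : V) :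
    (hist π n).getD i d = π i :=
  getD_ofFn _ (by omega) d

lemma prefixList_getD (m : ℕ → ℕ) {i k : ℕ} (h : i ≤ k) :
    (prefixList m k).getD i 0 = m i :=
  getD_ofFn _ (by omega) 0

lemma prefixList_length (m : ℕ → ℕ) (k : ℕ) : (prefixList m k).length = k + 1 := by
  simp [prefixList]

lemma interleave_even (m n : ℕ → ℕ) (j : ℕ) : interleave m n (2 * j) = m j := by
  have h1 : (2 * j) % 2 = 0 := by omega
  have h2 : (2 * j) / 2 = j := by omega
  simp [interleave, h1, h2]

lemma interleave_odd (m n : ℕ → ℕ) (j : ℕ) : interleave m n (2 * j + 1) = n j := by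
  have h1 : (2 * j + 1) % 2 = 1 := by omega
  have h2 : (2 * j + 1) / 2 = j := by omega
  simp [interleave, h1, h2]

/-- Finite prefixes of a consistent play are consistent histories. -/
lemma consHist_hist {V : Type} {G : GameGraph V} {p : Player} {σ : List V → V} {u₀ : V}
    {π : ℕ → V} (hp : IsPlayFrom G u₀ π) (hc : ConsistentPlay G p σ π) :
    ∀ n, ConsHist G p σ u₀ (hist π n) := by
  intro n
  induction n with
  | zero =>
    have h0 : hist π 0 = [u₀] := by rw [hist_zero, hp.1]
    rw [h0]; exact ConsHist.init
  | succ n ih =>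
    rw [hist_succ]
    by_cases h : G.owner (π n) = p
    · rw [hc n h]
      exact ConsHist.ownStep _ (π n) ih (hist_getLast? π n) h
    · exact ConsHist.oppStep _ (π n) (π (n + 1)) ih (hist_getLast? π n) h (hp.2 n)

end GSAux
namespace GSAux

variable {Q : Type}

/-- configuration of a vertex -/
def cfg (v : Q × Player × ℕ) : Q × ℕ := (v.1, v.2.2)

variable (A : DPA Q)

/-- initial vertex -/
def u0 : Q × Player × ℕ := (A.q0, Player.one, 0)

/-- make the move `a` from vertex `v` -/
def stepV (v : Q × Player × ℕ) (a : ℕ) : Q × Player × ℕ :=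
  ((A.next (cfg v) a).1, v.2.1.other, (A.next (cfg v) a).2)

lemma cfg_stepV (v : Q × Player × ℕ) (a : ℕ) : cfg (stepV A v a) = A.next (cfg v) a := rfl

lemma owner_eq (v : Q × Player × ℕ) : A.gameGraph.owner v = v.2.1 := rfl

lemma color_eq (v : Q × Player × ℕ) : A.gameGraph.color v = A.color v.1 := rfl

lemma E_iff (v w : Q × Player × ℕ) :
    A.gameGraph.E v w ↔ w.2.1 = v.2.1.other ∧ ∃ a, A.next (cfg v) a = cfg w := Iff.rfl

lemma E_stepV (v : Q × Player × ℕ) (a : ℕ) : A.gameGraph.E v (stepV A v a) :=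
  ⟨rfl, a, rfl⟩

lemma plr_other {v w : Q × Player × ℕ} (h : A.gameGraph.E v w) : w.2.1 = v.2.1.other := h.1

open Classical in
/-- pick a letter realizing an edge -/
noncomputable def pick (v w : Q × Player × ℕ) : ℕ :=
  if h : ∃ a, A.next (cfg v) a = cfg w then h.choose else 0

lemma pick_spec {v w : Q × Player × ℕ} (h : A.gameGraph.E v w) :
    A.next (cfg v) (pick A v w) = cfg w := by
  have h2 : ∃ a, A.next (cfg v) a = cfg w := h.2
  rw [pick]
  rw [dif_pos h2]
  exact h2.choose_spec

/-- in a play from `u0`, the player component alternates -/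
lemma play_plr {π : ℕ → Q × Player × ℕ} (hp : IsPlayFrom A.gameGraph (u0 A) π) :
    ∀ k, (π k).2.1 = plr k := by
  intro k
  induction k with
  | zero => rw [hp.1]; simp [u0, plr]
  | succ k ih => rw [plr_other A (hp.2 k), ih, plr_succ]

/-- the run on a word tracking the play has the configurations of the play -/
lemma run_eq {π : ℕ → Q × Player × ℕ} {β : ℕ → ℕ} (h0 : π 0 = u0 A)
    (h : ∀ k, A.next (cfg (π k)) (β k) = cfg (π (k + 1))) :
    ∀ k, A.run β k = cfg (π k) := by
  intro k
  induction k with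
  | zero => rw [h0]; rfl
  | succ k ih => rw [DPA.run, ih, h k]

lemma colors_eq {π : ℕ → Q × Player × ℕ} {β : ℕ → ℕ}
    (hrun : ∀ k, A.run β k = cfg (π k)) :
    (fun k => A.color (A.run β k).1) = fun k => A.gameGraph.color (π k) := by
  funext k
  rw [hrun k]
  rfl

end GSAux
namespace GSAux

variable {Q : Type} (A : DPA Q)

/-- Player I's letters extracted from a history (pairs at positions (0,1),(2,3),…). -/
noncomputable def lettersEven (l : List (Q × Player × ℕ)) : List ℕ :=
  List.ofFn (fun i : Fin (l.length / 2) =>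
    pick A (l.getD (2 * i) (u0 A)) (l.getD (2 * i + 1) (u0 A)))

/-- Player II's letters extracted from a history (pairs at positions (1,2),(3,4),…). -/
noncomputable def lettersOdd (l : List (Q × Player × ℕ)) : List ℕ :=
  List.ofFn (fun i : Fin (l.length / 2) =>
    pick A (l.getD (2 * i + 1) (u0 A)) (l.getD (2 * i + 2) (u0 A)))

lemma lettersEven_hist (π : ℕ → Q × Player × ℕ) (j : ℕ) :
    lettersEven A (hist π (2 * j + 1)) =
      prefixList (fun i => pick A (π (2 * i)) (π (2 * i + 1))) j := by
  refine ofFn_congr' (by rw [hist_length]; omega) _ _ (fun i h1 h2 => ?_)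
  rw [hist_length] at h1
  exact congrArg₂ (pick A) (hist_getD π (show 2 * i ≤ 2 * j + 1 by omega) (u0 A))
    (hist_getD π (show 2 * i + 1 ≤ 2 * j + 1 by omega) (u0 A))

lemma lettersOdd_hist_zero (π : ℕ → Q × Player × ℕ) :
    lettersOdd A (hist π 0) = [] := by
  rw [lettersOdd, List.ofFn_eq_nil_iff, hist_length]

lemma lettersOdd_hist_succ (π : ℕ → Q × Player × ℕ) (j : ℕ) :
    lettersOdd A (hist π (2 * (j + 1))) =
      prefixList (fun i => pick A (π (2 * i + 1)) (π (2 * i + 2))) j := by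
  refine ofFn_congr' (by rw [hist_length]; omega) _ _ (fun i h1 h2 => ?_)
  rw [hist_length] at h1
  exact congrArg₂ (pick A) (hist_getD π (show 2 * i + 1 ≤ 2 * (j + 1) by omega) (u0 A))
    (hist_getD π (show 2 * i + 2 ≤ 2 * (j + 1) by omega) (u0 A))

/-- graph strategy for Player II induced by a Gale–Stewart strategy -/
noncomputable def gsII (σ : List ℕ → ℕ) (l : List (Q × Player × ℕ)) : Q × Player × ℕ :=
  stepV A (l.getLast?.getD (u0 A)) (σ (lettersEven A l))

/-- graph strategy for Player I induced by a Gale–Stewart strategy -/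
noncomputable def gsI (τ : List ℕ → ℕ) (l : List (Q × Player × ℕ)) : Q × Player × ℕ :=
  stepV A (l.getLast?.getD (u0 A)) (τ (lettersOdd A l))

lemma dirII_fwd (h : WinsII A.Lang) :
    u0 A ∈ WinningRegion A.gameGraph Player.two := by
  obtain ⟨σ, hσ⟩ := h
  refine ⟨gsII A σ, ?_, ?_⟩
  · intro l v hch hlast hown
    show A.gameGraph.E v (gsII A σ l)
    rw [gsII, hlast, Option.getD_some]
    exact E_stepV A v _
  · intro π hp hc
    have hplr := play_plr A hp
    set m : ℕ → ℕ := fun i => pick A (π (2 * i)) (π (2 * i + 1)) with hm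
    set n : ℕ → ℕ := fun k => σ (prefixList m k) with hn
    have key : ∀ k, A.next (cfg (π k)) (interleave m n k) = cfg (π (k + 1)) := by
      intro k
      rcases Nat.even_or_odd k with ⟨j, hj⟩ | ⟨j, hj⟩
      · have hk : k = 2 * j := by omega
        subst hk
        rw [interleave_even]
        exact pick_spec A (hp.2 (2 * j))
      · have hk : k = 2 * j + 1 := by omega
        subst hk
        rw [interleave_odd]
        have hown : A.gameGraph.owner (π (2 * j + 1)) = Player.two := by
          rw [owner_eq, hplr, plr_two_mul_add_one]
        rw [hc _ hown, gsII, hist_getLast?, Option.getD_some, lettersEven_hist, cfg_stepV]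
    have hrun := run_eq A hp.1 key
    show MaxInfEven fun k => A.gameGraph.color (π k)
    rw [← colors_eq A hrun]
    exact hσ m

lemma dirI_fwd (h : WinsI A.Lang) :
    u0 A ∈ WinningRegion A.gameGraph Player.one := by
  obtain ⟨τ, hτ⟩ := h
  refine ⟨gsI A τ, ?_, ?_⟩
  · intro l v hch hlast hown
    show A.gameGraph.E v (gsI A τ l)
    rw [gsI, hlast, Option.getD_some]
    exact E_stepV A v _
  · intro π hp hc
    have hplr := play_plr A hp
    set n : ℕ → ℕ := fun i => pick A (π (2 * i + 1)) (π (2 * i + 2)) with hn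
    set m : ℕ → ℕ := playerIMoves τ n with hm
    have hmove : ∀ j, τ (lettersOdd A (hist π (2 * j))) = m j := by
      intro j
      cases j with
      | zero => rw [mul_zero, lettersOdd_hist_zero]; rfl
      | succ t => rw [lettersOdd_hist_succ]; rfl
    have key : ∀ k, A.next (cfg (π k)) (interleave m n k) = cfg (π (k + 1)) := by
      intro k
      rcases Nat.even_or_odd k with ⟨j, hj⟩ | ⟨j, hj⟩
      · have hk : k = 2 * j := by omega
        subst hk
        rw [interleave_even]
        have hown : A.gameGraph.owner (π (2 * j)) = Player.one := by
          rw [owner_eq, hplr, plr_two_mul]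
        rw [hc _ hown, gsI, hist_getLast?, Option.getD_some, hmove, cfg_stepV]
      · have hk : k = 2 * j + 1 := by omega
        subst hk
        rw [interleave_odd]
        have h2 : 2 * j + 1 + 1 = 2 * j + 2 := rfl
        rw [h2]
        exact pick_spec A (hp.2 (2 * j + 1))
    have hrun := run_eq A hp.1 key
    show ¬ MaxInfEven fun k => A.gameGraph.color (π k)
    rw [← colors_eq A hrun]
    exact hτ n

end GSAux
namespace GSAux

variable {Q : Type} (A : DPA Q)

/-- the list of the first `k+1` vertices of the play in which player `po` follows the
graph strategy `σ` and the opponent plays the letters `β`. -/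
noncomputable def buildL (po : Player) (σ : List (Q × Player × ℕ) → Q × Player × ℕ)
    (β : ℕ → ℕ) : ℕ → List (Q × Player × ℕ)
  | 0 => [u0 A]
  | k + 1 =>
    buildL po σ β k ++
      [if plr k = po then σ (buildL po σ β k)
       else stepV A ((buildL po σ β k).getLast?.getD (u0 A)) (β (k / 2))]

/-- the corresponding infinite play -/
noncomputable def piB (po : Player) (σ : List (Q × Player × ℕ) → Q × Player × ℕ)
    (β : ℕ → ℕ) (k : ℕ) : Q × Player × ℕ :=
  (buildL A po σ β k).getLast?.getD (u0 A)

lemma piB_zero (po σ β) : piB A po σ β 0 = u0 A := rfl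

lemma piB_succ (po σ β k) :
    piB A po σ β (k + 1) =
      if plr k = po then σ (buildL A po σ β k)
      else stepV A (piB A po σ β k) (β (k / 2)) := by
  rw [piB, buildL, List.getLast?_concat, Option.getD_some, piB]

lemma buildL_eq_hist (po σ β) : ∀ k, buildL A po σ β k = hist (piB A po σ β) k := by
  intro k
  induction k with
  | zero => rfl
  | succ k ih =>
    rw [hist_succ, ← ih, piB, buildL, List.getLast?_concat, Option.getD_some]

lemma buildL_congr (po σ) {β β' : ℕ → ℕ} :
    ∀ k, (∀ i, i < k → plr i ≠ po → β (i / 2) = β' (i / 2)) →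
      buildL A po σ β k = buildL A po σ β' k := by
  intro k
  induction k with
  | zero => intro _; rfl
  | succ k ih =>
    intro h
    have hk := ih (fun i hi => h i (by omega))
    rw [buildL, buildL, hk]
    by_cases hp : plr k = po
    · rw [if_pos hp, if_pos hp]
    · rw [if_neg hp, if_neg hp, h k (by omega) hp]

lemma piB_congr (po σ) {β β' : ℕ → ℕ} (k : ℕ)
    (h : ∀ i, i < k → plr i ≠ po → β (i / 2) = β' (i / 2)) :
    piB A po σ β k = piB A po σ β' k := by
  rw [piB, piB, buildL_congr A po σ k h]

section

variable {po : Player} {σ : List (Q × Player × ℕ) → Q × Player × ℕ}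
  (hσ : IsStrategyFrom A.gameGraph po σ (u0 A)) (β : ℕ → ℕ)

include hσ

lemma buildL_spec :
    ∀ k, ConsHist A.gameGraph po σ (u0 A) (buildL A po σ β k) ∧
      (piB A po σ β k).2.1 = plr k := by
  have hgl : ∀ k, (buildL A po σ β k).getLast? = some (piB A po σ β k) := by
    intro k
    rw [buildL_eq_hist]
    exact hist_getLast? _ k
  have hE : ∀ k, ConsHist A.gameGraph po σ (u0 A) (buildL A po σ β k) →
      (piB A po σ β k).2.1 = plr k → A.gameGraph.E (piB A po σ β k) (piB A po σ β (k + 1)) := by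
    intro k hch hpl
    rw [piB_succ]
    by_cases hp : plr k = po
    · rw [if_pos hp]
      exact hσ _ _ hch (hgl k) (by rw [owner_eq, hpl, hp])
    · rw [if_neg hp]
      exact E_stepV A _ _
  intro k
  induction k with
  | zero => exact ⟨ConsHist.init, by simp [piB_zero, u0, plr]⟩
  | succ k ih =>
    have hEk := hE k ih.1 ih.2
    constructor
    · rw [buildL]
      by_cases hp : plr k = po
      · rw [if_pos hp]
        exact ConsHist.ownStep _ _ ih.1 (hgl k) (by rw [owner_eq, ih.2, hp])
      · rw [if_neg hp]
        have hcur : piB A po σ β (k + 1) =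
            stepV A ((buildL A po σ β k).getLast?.getD (u0 A)) (β (k / 2)) := by
          rw [piB_succ, if_neg hp]; rfl
        refine ConsHist.oppStep _ (piB A po σ β k) _ ih.1 (hgl k)
          (by rw [owner_eq, ih.2]; exact hp) ?_
        have := hEk
        rw [hcur] at this
        rwa [hgl k, Option.getD_some] at this ⊢
    · rw [plr_other A hEk, ih.2, plr_succ]

lemma isPlay_piB : IsPlayFrom A.gameGraph (u0 A) (piB A po σ β) :=
  ⟨piB_zero A po σ β, fun k => by
    have h := buildL_spec A hσ β k
    have hgl : (buildL A po σ β k).getLast? = some (piB A po σ β k) := by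
      rw [buildL_eq_hist]; exact hist_getLast? _ k
    rw [piB_succ]
    by_cases hp : plr k = po
    · rw [if_pos hp]
      exact hσ _ _ h.1 hgl (by rw [owner_eq, h.2, hp])
    · rw [if_neg hp]
      exact E_stepV A _ _⟩

lemma consistent_piB : ConsistentPlay A.gameGraph po σ (piB A po σ β) := by
  intro k hown
  have h := buildL_spec A hσ β k
  rw [owner_eq, h.2] at hown
  rw [piB_succ, if_pos hown, buildL_eq_hist]

end

end GSAux
namespace GSAux

variable {Q : Type} (A : DPA Q)

/-- Player II's Gale–Stewart answer at round `j` against Player I's letters `β`. -/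
noncomputable def fII (σ : List (Q × Player × ℕ) → Q × Player × ℕ) (β : ℕ → ℕ) (j : ℕ) : ℕ :=
  pick A (piB A .two σ β (2 * j + 1)) (piB A .two σ β (2 * j + 2))

/-- the Gale–Stewart strategy of Player II induced by a graph strategy. -/
noncomputable def gs2 (σ : List (Q × Player × ℕ) → Q × Player × ℕ) : List ℕ → ℕ :=
  fun ms => fII A σ (fun i => ms.getD i 0) (ms.length - 1)

lemma dirII_bwd (h : u0 A ∈ WinningRegion A.gameGraph Player.two) : WinsII A.Lang := by
  obtain ⟨σ, hσ, hwin⟩ := h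
  refine ⟨gs2 A σ, fun m => ?_⟩
  set π : ℕ → Q × Player × ℕ := piB A .two σ m with hπ
  set n : ℕ → ℕ := fun k => gs2 A σ (prefixList m k) with hndef
  have hp : IsPlayFrom A.gameGraph (u0 A) π := isPlay_piB A hσ m
  have hcons : ConsistentPlay A.gameGraph Player.two σ π := consistent_piB A hσ m
  have hn : ∀ j, n j = pick A (π (2 * j + 1)) (π (2 * j + 2)) := by
    intro j
    have hlen : (prefixList m j).length - 1 = j := by rw [prefixList_length]; omega
    show fII A σ (fun i => (prefixList m j).getD i 0) ((prefixList m j).length - 1) = _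
    rw [hlen, fII]
    have hc : ∀ k, k ≤ 2 * j + 2 →
        piB A .two σ (fun i => (prefixList m j).getD i 0) k = piB A .two σ m k := by
      intro k hk
      refine piB_congr A _ σ k (fun i hi hpl => ?_)
      have he : i % 2 = 0 := even_of_plr_ne_two hpl
      exact prefixList_getD m (by omega)
    rw [hc _ (by omega), hc _ (by omega)]
  have key : ∀ k, A.next (cfg (π k)) (interleave m n k) = cfg (π (k + 1)) := by
    intro k
    rcases Nat.even_or_odd k with ⟨j, hj⟩ | ⟨j, hj⟩
    · have hk : k = 2 * j := by omega
      subst hk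
      rw [interleave_even]
      have hne : plr (2 * j) ≠ Player.two := by rw [plr_two_mul]; simp
      have : π (2 * j + 1) = stepV A (π (2 * j)) (m j) := by
        rw [hπ, piB_succ, if_neg hne, show 2 * j / 2 = j by omega]
      rw [this, cfg_stepV]
    · have hk : k = 2 * j + 1 := by omega
      subst hk
      rw [interleave_odd, hn j]
      exact pick_spec A (hp.2 (2 * j + 1))
  have hwon := hwin π hp hcons
  show MaxInfEven fun k => A.color (A.run (interleave m n) k).1
  rw [colors_eq A (run_eq A hp.1 key)]
  exact hwon

/-- Player I's Gale–Stewart move at round `j` against Player II's letters `β`. -/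
noncomputable def fI (σ : List (Q × Player × ℕ) → Q × Player × ℕ) (β : ℕ → ℕ) (j : ℕ) : ℕ :=
  pick A (piB A .one σ β (2 * j)) (piB A .one σ β (2 * j + 1))

/-- the Gale–Stewart strategy of Player I induced by a graph strategy. -/
noncomputable def gs1 (σ : List (Q × Player × ℕ) → Q × Player × ℕ) : List ℕ → ℕ :=
  fun ms => fI A σ (fun i => ms.getD i 0) ms.length

lemma dirI_bwd (h : u0 A ∈ WinningRegion A.gameGraph Player.one) : WinsI A.Lang := by
  obtain ⟨σ, hσ, hwin⟩ := h
  refine ⟨gs1 A σ, fun n => ?_⟩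
  set π : ℕ → Q × Player × ℕ := piB A .one σ n with hπ
  set m : ℕ → ℕ := playerIMoves (gs1 A σ) n with hmdef
  have hp : IsPlayFrom A.gameGraph (u0 A) π := isPlay_piB A hσ n
  have hcons : ConsistentPlay A.gameGraph Player.one σ π := consistent_piB A hσ n
  have hcongr : ∀ (β : ℕ → ℕ) j, (∀ i, i ≤ j - 1 → β i = n i) → j ≥ 1 →
      fI A σ β j = fI A σ n j := by
    intro β j hβ hj
    have hc : ∀ k, k ≤ 2 * j + 1 → piB A .one σ β k = piB A .one σ n k := by
      intro k hk
      refine piB_congr A _ σ k (fun i hi hpl => ?_)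
      have he : i % 2 = 1 := odd_of_plr_ne_one hpl
      exact hβ _ (by omega)
    rw [fI, fI, hc _ (by omega), hc _ (by omega)]
  have hm : ∀ j, m j = pick A (π (2 * j)) (π (2 * j + 1)) := by
    intro j
    cases j with
    | zero =>
      show fI A σ (fun i => ([] : List ℕ).getD i 0) (List.length []) = _
      have hc : ∀ k, k ≤ 1 →
          piB A .one σ (fun i => ([] : List ℕ).getD i 0) k = piB A .one σ n k := by
        intro k hk
        refine piB_congr A _ σ k (fun i hi hpl => ?_)
        have he : i % 2 = 1 := odd_of_plr_ne_one hpl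
        omega
      show fI A σ _ 0 = _
      rw [fI, hc _ (by omega), hc _ (by omega)]
    | succ t =>
      show fI A σ (fun i => (prefixList n t).getD i 0) ((prefixList n t).length) = _
      rw [prefixList_length]
      exact hcongr _ (t + 1) (fun i hi => prefixList_getD n (by omega)) (by omega)
  have key : ∀ k, A.next (cfg (π k)) (interleave m n k) = cfg (π (k + 1)) := by
    intro k
    rcases Nat.even_or_odd k with ⟨j, hj⟩ | ⟨j, hj⟩
    · have hk : k = 2 * j := by omega
      subst hk
      rw [interleave_even, hm j]
      exact pick_spec A (hp.2 (2 * j))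
    · have hk : k = 2 * j + 1 := by omega
      subst hk
      rw [interleave_odd]
      have hne : plr (2 * j + 1) ≠ Player.one := by rw [plr_two_mul_add_one]; simp
      have : π (2 * j + 1 + 1) = stepV A (π (2 * j + 1)) (n j) := by
        rw [hπ, piB_succ, if_neg hne, show (2 * j + 1) / 2 = j by omega]
      rw [this, cfg_stepV]
  have hwon := hwin π hp hcons
  intro hmem
  have : MaxInfEven fun k => A.color (A.run (interleave m n) k).1 := hmem
  rw [colors_eq A (run_eq A hp.1 key)] at this
  exact hwon this

end GSAux
/-- Player II wins the Gale–Stewart game `Γ(L_A)` iff the vertex `(q₀, I, 0)` belongs to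
the winning region of Player II in the parity game over `G(A)`; analogously for Player I. -/
theorem statement1 {Q : Type} [Fintype Q] (A : DPA Q) :
    (WinsII A.Lang ↔ (A.q0, Player.one, 0) ∈ WinningRegion A.gameGraph Player.two) ∧
    (WinsI A.Lang ↔ (A.q0, Player.one, 0) ∈ WinningRegion A.gameGraph Player.one) := by
  exact ⟨⟨fun h => GSAux.dirII_fwd A h, fun h => GSAux.dirII_bwd A h⟩,
    ⟨fun h => GSAux.dirI_fwd A h, fun h => GSAux.dirI_bwd A h⟩⟩
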